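/- Let R be an equivalence relation on S^LMC such that the quotient space S^LMC/R is Hausdorff, and let Γ = {⋂[p̃]_R : p̃ ∈ S^LMC}. Then, with the τ* quotient topology on Γ, the map φ : S^LMC/R → Γ defined by φ([p̃]) = ⋂[p̃] is a homeomorphism; in particular Γ is homeomorphic to S^LMC/R. -/

import Mathlib

open Set Topology WeakDual BoundedContinuousFunction

noncomputable section

variable (S : Type*) [TopologicalSpace S] [T2Space S] [Semigroup S]

/-- Left translation `λ_s`, as a continuous map, given continuity of left translations. -/
def lamC (hl : ∀ s : S, Continuous (fun t => s * t)) (s : S) : C(S, S) :=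
  ⟨fun t => s * t, hl s⟩

/-- An m-admissible subalgebra of `CB(S) = S →ᵇ ℂ`. -/
structure MAdmissible (hl : ∀ s : S, Continuous (fun t => s * t)) : Type _ where
  carrier : StarSubalgebra ℂ (S →ᵇ ℂ)
  isClosed' : IsClosed (carrier : Set (S →ᵇ ℂ))
  leftInvariant : ∀ (s : S), ∀ f ∈ carrier, f.compContinuous (lamC S hl s) ∈ carrier
  mAdmissible : ∀ (μ : characterSpace ℂ carrier) (f : S →ᵇ ℂ) (hf : f ∈ carrier),
    ∃ g ∈ carrier, ∀ s : S,
      g s = μ ⟨f.compContinuous (lamC S hl s), leftInvariant s f hf⟩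

variable {hl : ∀ s : S, Continuous (fun t => s * t)}

/-- The spectrum `S^F` of an m-admissible subalgebra. -/
abbrev specF (F : MAdmissible S hl) : Type _ := characterSpace ℂ F.carrier

/-- Evaluation at a point, as an algebra homomorphism on `F`. -/
def evalHom (F : MAdmissible S hl) (s : S) : F.carrier →ₐ[ℂ] ℂ where
  toFun f := (f : S →ᵇ ℂ) s
  map_one' := rfl
  map_mul' _ _ := rfl
  map_zero' := rfl
  map_add' _ _ := rfl
  commutes' _ := rfl

/-- The evaluation map `ε : S → S^F`. -/
def epsF (F : MAdmissible S hl) (s : S) : specF S F :=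
  haveI : CompleteSpace F.carrier := F.isClosed'.completeSpace_coe
  CharacterSpace.equivAlgHom.symm (evalHom S F s)

variable (F : MAdmissible S hl)

/-- `Z(F)`: the collection of zero sets of members of `F`. -/
def ZSet : Set (Set S) := {A | ∃ f ∈ F.carrier, A = {s : S | f s = 0}}

/-- z-filters on `F`. -/
def IsZFilter (𝒜 : Set (Set S)) : Prop :=
  𝒜 ⊆ ZSet S F ∧ ∅ ∉ 𝒜 ∧ Set.univ ∈ 𝒜 ∧
    (∀ A ∈ 𝒜, ∀ B ∈ 𝒜, A ∩ B ∈ 𝒜) ∧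
    ∀ A ∈ 𝒜, ∀ B ∈ ZSet S F, A ⊆ B → B ∈ 𝒜

/-- `FS`: the collection of z-ultrafilters on `F`. -/
def zUltra : Set (Set (Set S)) :=
  {p | IsZFilter S F p ∧ ∀ q, IsZFilter S F q → p ⊆ q → q = p}

/-- `cl ε(A)` in `S^F`. -/
def epsCl (A : Set S) : Set (specF S F) := closure (epsF S F '' A)

/-- `⋂_{A ∈ p} cl ε(A)`; for `p ∈ FS` this is the singleton of the corresponding point of `S^F`. -/
def core (p : Set (Set S)) : Set (specF S F) := ⋂ A ∈ p, epsCl S F A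

/-- `p̃ = ⋂ [p]`, the intersection of the equivalence class of `p`. -/
def tilde (p : Set (Set S)) : Set (Set S) :=
  ⋂₀ {q | q ∈ zUltra S F ∧ core S F q = core S F p}

/-- pure z-filters. -/
def IsPure (𝒜 : Set (Set S)) : Prop :=
  IsZFilter S F 𝒜 ∧ ∀ p ∈ zUltra S F, 𝒜 ⊆ p → 𝒜 ⊆ tilde S F p

/-- `bar(𝒜) = {p̃ : 𝒜 ⊆ p}`, viewed as a subset of `S^F` via the identification of
`p̃` with the point `μ` such that `⋂_{A ∈ p} cl ε(A) = {μ}`. -/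
def barSet (𝒜 : Set (Set S)) : Set (specF S F) :=
  {μ | ∃ p ∈ zUltra S F, 𝒜 ⊆ p ∧ core S F p = {μ}}

/-- `𝒜° = {A ∈ 𝒜 : bar(𝒜) ⊆ int cl ε(A)}`. -/
def circA (𝒜 : Set (Set S)) : Set (Set S) :=
  {A ∈ 𝒜 | barSet S F 𝒜 ⊆ interior (epsCl S F A)}

/-- `⋂ J`, the intersection of the z-filters `p̃` corresponding to points of `J ⊆ S^F`. -/
def interOf (J : Set (specF S F)) : Set (Set S) :=
  ⋂₀ {C | ∃ p ∈ zUltra S F, ∃ μ ∈ J, core S F p = {μ} ∧ C = tilde S F p}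

/-- `⋂ [p̃]_R` for a relation `r` on `S^F`. -/
def classInter (r : specF S F → specF S F → Prop) (μ : specF S F) : Set (Set S) :=
  interOf S F {ν | r μ ν}

/-- `Ω_ℬ(A) = {x ∈ S : λ_x⁻¹(A) ∈ ℬ}`. -/
def OmegaZ (ℬ : Set (Set S)) (A : Set S) : Set S := {x : S | (fun t => x * t) ⁻¹' A ∈ ℬ}

/-- `𝒜 + ℬ`. -/
def zsum (𝒜 ℬ : Set (Set S)) : Set (Set S) :=
  {A ∈ ZSet S F | ∀ F' ∈ ZSet S F, OmegaZ S ℬ A ⊆ F' → F' ∈ 𝒜}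

/-- `𝒜 ⊙ ℬ = ⋂ bar(𝒜 + ℬ)`. -/
def odot (𝒜 ℬ : Set (Set S)) : Set (Set S) :=
  interOf S F (barSet S F (zsum S F 𝒜 ℬ))

/-- topological choice functions for a set `Γ` of z-filters. -/
def IsTCF (Γ : Set (Set (Set S))) (f : Set (Set S) → Set S) : Prop :=
  ∀ L ∈ Γ, f L ∈ L ∧ barSet S F L ⊆ interior (epsCl S F (f L))

/-- `A* = {𝓛 ∈ Γ : bar(𝓛) ∩ cl ε(A) ≠ ∅}`. -/
def starSet (Γ : Set (Set (Set S))) (A : Set S) : Set Γ :=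
  {L : Γ | (barSet S F (L : Set (Set S)) ∩ epsCl S F A).Nonempty}

/-- `A_* = {𝓛 ∈ Γ : bar(𝓛) ⊆ cl ε(A)}`. -/
def lowStar (Γ : Set (Set (Set S))) (A : Set S) : Set Γ :=
  {L : Γ | barSet S F (L : Set (Set S)) ⊆ epsCl S F A}

/-- The `τ*` quotient topology on `Γ`. -/
def tauStar (Γ : Set (Set (Set S))) : TopologicalSpace Γ :=
  TopologicalSpace.generateFrom {U | ∃ A ∈ ZSet S F, U = (starSet S F Γ A)ᶜ}

/-- The `τ_*` quotient topology on `Γ`. -/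
def tauLow (Γ : Set (Set (Set S))) : TopologicalSpace Γ :=
  TopologicalSpace.generateFrom {U | ∃ A ∈ ZSet S F, U = (lowStar S F Γ A)ᶜ}

/-- `Γ` is a quotient of `S^F`: conditions (a) and (b) of Theorem 3.9. -/
def IsQuotientOf (Γ : Set (Set (Set S))) : Prop :=
  (∀ L ∈ Γ, IsPure S F L) ∧
  (∀ f : Set (Set S) → Set S, IsTCF S F Γ f →
    ∃ 𝓕 : Finset (Set (Set S)), ↑𝓕 ⊆ Γ ∧
      (Set.univ : Set (specF S F)) = ⋃ L ∈ 𝓕, interior (epsCl S F (f L))) ∧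
  (∀ L ∈ Γ, ∀ K ∈ Γ, L ≠ K →
    ∃ A ∈ circA S F L, ∃ B ∈ circA S F K, ∀ C ∈ Γ,
      (∀ H ∈ ZSet S F, (interior (epsCl S F A))ᶜ ⊆ interior (epsCl S F H) → H ∈ C) ∨
      (∀ T ∈ ZSet S F, (interior (epsCl S F B))ᶜ ⊆ interior (epsCl S F T) → T ∈ C))

/-- The defining property of the map `γ : S^F → Γ` sending `p̃` to the unique member of `Γ`
contained in `p̃`. -/
def IsGamma (Γ : Set (Set (Set S))) (γ : specF S F → Γ) : Prop :=
  ∀ (μ : specF S F) (p : Set (Set S)), p ∈ zUltra S F → core S F p = {μ} →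
    (γ μ : Set (Set S)) ⊆ tilde S F p

/-- The defining property of the multiplication of `S^F`: `(μν)(f) = μ(T_ν f)` where
`(T_ν f)(s) = ν(L_s f)`. -/
def IsSpecMul (mul : specF S F → specF S F → specF S F) : Prop :=
  ∀ (μ ν : specF S F) (f : S →ᵇ ℂ) (hf : f ∈ F.carrier) (g : S →ᵇ ℂ) (hg : g ∈ F.carrier),
    (∀ s : S, g s = ν ⟨f.compContinuous (lamC S hl s), F.leftInvariant s f hf⟩) →
    mul μ ν ⟨f, hf⟩ = μ ⟨g, hg⟩

/-- `LMC(S)`, as a subset of `CB(S)`. -/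
def LMCset (hl : ∀ s : S, Continuous (fun t => s * t)) : Set (S →ᵇ ℂ) :=
  {f | ∀ μ : characterSpace ℂ (S →ᵇ ℂ),
    Continuous fun s : S => μ (f.compContinuous (lamC S hl s))}


/-! ### Auxiliary development -/

section AuxDev

set_option linter.unusedSectionVars false
set_option maxHeartbeats 1000000
set_option synthInstance.maxHeartbeats 400000


theorem aux_epsF_app (s : S) (a : F.carrier) : epsF S F s a = (a : S →ᵇ ℂ) s := rfl

theorem aux_compact : CompactSpace (specF S F) := by
  haveI : CompleteSpace F.carrier := F.isClosed'.completeSpace_coe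
  infer_instance

theorem aux_normal : NormalSpace (specF S F) := by
  haveI := aux_compact S F
  infer_instance

theorem pull_exists (G : C(specF S F, ℂ)) :
    ∃ a : F.carrier, ∀ x : specF S F, x a = G x := by
  letI : CompleteSpace F.carrier := F.isClosed'.completeSpace_coe
  letI : CommCStarAlgebra F.carrier := CommCStarAlgebra.mk
  refine ⟨(gelfandStarTransform F.carrier).symm G, fun x => ?_⟩
  rw [← gelfandStarTransform_apply_apply, (gelfandStarTransform F.carrier).apply_symm_apply G]

/-- Pull back a continuous function on the spectrum to an element of `F` via the
Gelfand transform. -/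
noncomputable def pullC (G : C(specF S F, ℂ)) : F.carrier :=
  (pull_exists S F G).choose

theorem pullC_spec (G : C(specF S F, ℂ)) (x : specF S F) : x (pullC S F G) = G x :=
  (pull_exists S F G).choose_spec x

theorem pullC_app (G : C(specF S F, ℂ)) (s : S) :
    ((pullC S F G : F.carrier) : S →ᵇ ℂ) s = G (epsF S F s) := by
  rw [← aux_epsF_app, pullC_spec]

theorem aux_dense : closure (Set.range (epsF S F)) = Set.univ := by
  haveI := aux_compact S F
  haveI := aux_normal S F
  by_contra hne
  obtain ⟨x, hx⟩ : ∃ x : specF S F, x ∉ closure (Set.range (epsF S F)) := by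
    by_contra h
    push_neg at h
    exact hne (Set.eq_univ_of_forall h)
  obtain ⟨G, hG0, hG1, -⟩ := exists_continuous_zero_one_of_isClosed isClosed_closure
    (isClosed_singleton (x := x))
    (by simpa [Set.disjoint_singleton_right] using hx)
  set Gc : C(specF S F, ℂ) := ⟨fun y => ((G y : ℝ) : ℂ),
    Complex.continuous_ofReal.comp G.continuous⟩ with hGc
  have hz : pullC S F Gc = 0 := by
    apply Subtype.ext
    ext s
    rw [pullC_app]
    have : G (epsF S F s) = 0 := hG0 (subset_closure (Set.mem_range_self s))
    simp [hGc, this]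
  have h1 := pullC_spec S F Gc x
  rw [hz, map_zero] at h1
  have h2 : G x = 1 := hG1 rfl
  simp [hGc, h2] at h1

theorem epsCl_subset_of (A : Set S) (P : Set (specF S F)) (hP : IsClosed P)
    (h : ∀ s ∈ A, epsF S F s ∈ P) : epsCl S F A ⊆ P := by
  apply closure_minimal _ hP
  rintro _ ⟨s, hs, rfl⟩
  exact h s hs

theorem epsCl_le (G : C(specF S F, ℝ)) (c : ℝ) :
    epsCl S F {s : S | G (epsF S F s) ≤ c} ⊆ {x | G x ≤ c} :=
  epsCl_subset_of S F _ _ (isClosed_le G.continuous continuous_const) fun _ hs => hs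

theorem epsCl_ge (G : C(specF S F, ℝ)) (c : ℝ) :
    epsCl S F {s : S | c ≤ G (epsF S F s)} ⊆ {x | c ≤ G x} :=
  epsCl_subset_of S F _ _ (isClosed_le continuous_const G.continuous) fun _ hs => hs

theorem zset_le (G : C(specF S F, ℝ)) (c : ℝ) : {s : S | G (epsF S F s) ≤ c} ∈ ZSet S F := by
  set w : C(specF S F, ℂ) := ⟨fun x => ((max (G x - c) 0 : ℝ) : ℂ),
    Complex.continuous_ofReal.comp ((G.continuous.sub continuous_const).max continuous_const)⟩
    with hw
  refine ⟨(pullC S F w : S →ᵇ ℂ), (pullC S F w).2, ?_⟩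
  ext s
  simp only [Set.mem_setOf_eq, pullC_app, hw, ContinuousMap.coe_mk, Complex.ofReal_eq_zero]
  constructor
  · intro h
    exact max_eq_right (by linarith)
  · intro h
    have : G (epsF S F s) - c ≤ 0 := by
      by_contra hgt
      push_neg at hgt
      rw [max_eq_left hgt.le] at h
      linarith
    linarith

theorem zset_ge (G : C(specF S F, ℝ)) (c : ℝ) : {s : S | c ≤ G (epsF S F s)} ∈ ZSet S F := by
  have := zset_le S F (-G) (-c)
  simpa using this

theorem zset_univ : Set.univ ∈ ZSet S F := by
  refine ⟨0, zero_mem _, ?_⟩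
  ext s
  simp

theorem zset_inter {A B : Set S} (hA : A ∈ ZSet S F) (hB : B ∈ ZSet S F) :
    A ∩ B ∈ ZSet S F := by
  obtain ⟨f, hf, rfl⟩ := hA
  obtain ⟨g, hg, rfl⟩ := hB
  refine ⟨star f * f + star g * g,
    add_mem (mul_mem (star_mem hf) hf) (mul_mem (star_mem hg) hg), ?_⟩
  ext s
  simp only [Set.mem_inter_iff, Set.mem_setOf_eq, BoundedContinuousFunction.coe_add,
    BoundedContinuousFunction.coe_mul, BoundedContinuousFunction.coe_star, Pi.add_apply,
    Pi.mul_apply, Pi.star_apply]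
  have hfs : star (f s) * f s = ((Complex.normSq (f s) : ℝ) : ℂ) := by
    rw [Complex.star_def, Complex.normSq_eq_conj_mul_self]
  have hgs : star (g s) * g s = ((Complex.normSq (g s) : ℝ) : ℂ) := by
    rw [Complex.star_def, Complex.normSq_eq_conj_mul_self]
  rw [hfs, hgs, ← Complex.ofReal_add, Complex.ofReal_eq_zero]
  constructor
  · intro ⟨h1, h2⟩
    simp [h1, h2]
  · intro h
    have h1 : Complex.normSq (f s) = 0 ∧ Complex.normSq (g s) = 0 :=
      (add_eq_zero_iff_of_nonneg (Complex.normSq_nonneg _) (Complex.normSq_nonneg _)).mp h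
    exact ⟨Complex.normSq_eq_zero.mp h1.1, Complex.normSq_eq_zero.mp h1.2⟩

theorem zfilter_mem_nonempty {p : Set (Set S)} (hp : IsZFilter S F p) {A : Set S}
    (hA : A ∈ p) : A.Nonempty := by
  rcases A.eq_empty_or_nonempty with h | h
  · exact absurd (h ▸ hA) hp.2.1
  · exact h

theorem exists_zUltra {p : Set (Set S)} (hp : IsZFilter S F p) :
    ∃ q, p ⊆ q ∧ q ∈ zUltra S F := by
  have hch : ∀ c ⊆ {q | IsZFilter S F q}, IsChain (· ⊆ ·) c → c.Nonempty →
      ∃ ub ∈ {q | IsZFilter S F q}, ∀ s ∈ c, s ⊆ ub := by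
    intro c hc hchain hcne
    obtain ⟨q0, hq0⟩ := hcne
    refine ⟨⋃₀ c, ⟨?_, ?_, ?_, ?_, ?_⟩, fun s hs => Set.subset_sUnion_of_mem hs⟩
    · rintro A ⟨q, hq, hA⟩
      exact (hc hq).1 hA
    · rintro ⟨q, hq, hA⟩
      exact (hc hq).2.1 hA
    · exact ⟨q0, hq0, (hc hq0).2.2.1⟩
    · rintro A ⟨q1, hq1, hA⟩ B ⟨q2, hq2, hB⟩
      rcases hchain.total hq1 hq2 with h | h
      · exact ⟨q2, hq2, (hc hq2).2.2.2.1 A (h hA) B hB⟩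
      · exact ⟨q1, hq1, (hc hq1).2.2.2.1 A hA B (h hB)⟩
    · rintro A ⟨q, hq, hA⟩ B hB hAB
      exact ⟨q, hq, (hc hq).2.2.2.2 A hA B hB hAB⟩
  obtain ⟨m, hpm, hmax⟩ := zorn_subset_nonempty {q | IsZFilter S F q} hch p hp
  exact ⟨m, hpm, hmax.prop, fun q hq hsub => subset_antisymm (hmax.2 hq hsub) hsub⟩

theorem zUltra_mem_of_meets {p : Set (Set S)} (hp : p ∈ zUltra S F) {A : Set S}
    (hA : A ∈ ZSet S F) (h : ∀ Z ∈ p, (A ∩ Z).Nonempty) : A ∈ p := by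
  set q : Set (Set S) := {Z | Z ∈ ZSet S F ∧ ∃ W ∈ p, A ∩ W ⊆ Z} with hqdef
  have hq : IsZFilter S F q := by
    refine ⟨fun Z hZ => hZ.1, ?_, ⟨zset_univ S F, Set.univ, hp.1.2.2.1, Set.subset_univ _⟩,
      ?_, ?_⟩
    · rintro ⟨-, W, hW, hsub⟩
      obtain ⟨x, hx⟩ := h W hW
      exact hsub hx
    · rintro Z1 ⟨hZ1, W1, hW1, h1⟩ Z2 ⟨hZ2, W2, hW2, h2⟩
      exact ⟨zset_inter S F hZ1 hZ2, W1 ∩ W2, hp.1.2.2.2.1 W1 hW1 W2 hW2,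
        fun x hx => ⟨h1 ⟨hx.1, hx.2.1⟩, h2 ⟨hx.1, hx.2.2⟩⟩⟩
    · rintro Z ⟨hZ, W, hW, hsub⟩ B hB hZB
      exact ⟨hB, W, hW, hsub.trans hZB⟩
  have hpq : p ⊆ q := fun Z hZ => ⟨hp.1.1 hZ, Z, hZ, Set.inter_subset_right⟩
  have := hp.2 q hq hpq
  rw [← this]
  exact ⟨hA, Set.univ, hp.1.2.2.1, by simp⟩

theorem mem_epsCl_of_core {p : Set (Set S)} {ν : specF S F} (h : core S F p = {ν})
    {Z : Set S} (hZ : Z ∈ p) : ν ∈ epsCl S F Z := by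
  have hν : ν ∈ core S F p := by rw [h]; rfl
  rw [core] at hν
  exact Set.mem_iInter₂.mp hν Z hZ

theorem core_nonempty {p : Set (Set S)} (hp : IsZFilter S F p) :
    (core S F p).Nonempty := by
  haveI := aux_compact S F
  haveI : Nonempty {Z // Z ∈ p} := ⟨⟨Set.univ, hp.2.2.1⟩⟩
  have h := IsCompact.nonempty_iInter_of_directed_nonempty_isCompact_isClosed
    (fun Z : {Z // Z ∈ p} => epsCl S F Z.1) ?_ ?_ ?_ ?_
  · rw [core, Set.biInter_eq_iInter]
    exact h
  · rintro ⟨Z1, hZ1⟩ ⟨Z2, hZ2⟩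
    refine ⟨⟨Z1 ∩ Z2, hp.2.2.2.1 Z1 hZ1 Z2 hZ2⟩, ?_, ?_⟩
    · exact closure_mono (Set.image_mono Set.inter_subset_left)
    · exact closure_mono (Set.image_mono Set.inter_subset_right)
  · rintro ⟨Z, hZ⟩
    exact ((zfilter_mem_nonempty S F hp hZ).image _).closure
  · rintro ⟨Z, hZ⟩
    exact isClosed_closure.isCompact
  · rintro ⟨Z, hZ⟩
    exact isClosed_closure

theorem exists_core_singleton (ν : specF S F) : ∃ p ∈ zUltra S F, core S F p = {ν} := by
  haveI := aux_compact S F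
  haveI := aux_normal S F
  have hν : ν ∈ closure (Set.range (epsF S F)) := by rw [aux_dense]; trivial
  have hNB : (Filter.comap (epsF S F) (nhds ν)).NeBot := by
    rw [Filter.comap_neBot_iff]
    intro t ht
    obtain ⟨x, hxt, s, rfl⟩ := mem_closure_iff_nhds.mp hν t ht
    exact ⟨s, hxt⟩
  obtain ⟨U, hU⟩ := Ultrafilter.exists_le (Filter.comap (epsF S F) (nhds ν))
  set p0 : Set (Set S) := {Z | Z ∈ ZSet S F ∧ Z ∈ U} with hp0def
  have hp0 : IsZFilter S F p0 := by
    refine ⟨fun Z hZ => hZ.1, fun h => U.empty_notMem h.2,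
      ⟨zset_univ S F, Filter.univ_mem⟩, ?_, ?_⟩
    · rintro A ⟨hA1, hA2⟩ B ⟨hB1, hB2⟩
      exact ⟨zset_inter S F hA1 hB1, Filter.inter_mem hA2 hB2⟩
    · rintro A ⟨hA1, hA2⟩ B hB hAB
      exact ⟨hB, Filter.mem_of_superset hA2 hAB⟩
  obtain ⟨p, hsub, hpU⟩ := exists_zUltra S F hp0
  refine ⟨p, hpU, ?_⟩
  have hcsub : core S F p ⊆ {ν} := by
    intro κ hκ
    rw [Set.mem_singleton_iff]
    by_contra hκν
    obtain ⟨G, hG0, hG1, -⟩ := exists_continuous_zero_one_of_isClosed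
      (isClosed_singleton (x := ν)) (isClosed_singleton (x := κ))
      (by rw [Set.disjoint_singleton]; exact fun h => hκν h.symm)
    have hWU : {s : S | G (epsF S F s) ≤ 1/2} ∈ U := by
      have hopen : (epsF S F) ⁻¹' {x | G x < 1/2} ∈ Filter.comap (epsF S F) (nhds ν) :=
        Filter.preimage_mem_comap ((isOpen_lt G.continuous continuous_const).mem_nhds
          (by simp [hG0 rfl]))
      exact Filter.mem_of_superset (hU hopen) fun s hs =>
        show G (epsF S F s) ≤ 1/2 from le_of_lt hs
    have hW : {s : S | G (epsF S F s) ≤ 1/2} ∈ p := hsub ⟨zset_le S F G (1/2), hWU⟩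
    have hκW : κ ∈ epsCl S F {s : S | G (epsF S F s) ≤ 1/2} := by
      rw [core] at hκ
      exact Set.mem_iInter₂.mp hκ _ hW
    have h1 : G κ ≤ 1/2 := epsCl_le S F G (1/2) hκW
    rw [hG1 rfl] at h1
    norm_num at h1
  obtain ⟨x, hx⟩ := core_nonempty S F hpU.1
  have hxν : x = ν := hcsub hx
  rw [Set.eq_singleton_iff_unique_mem]
  exact ⟨hxν ▸ hx, fun y hy => hcsub hy⟩

theorem classInter_subset_of (st : Setoid (specF S F)) {μ ν : specF S F} {p : Set (Set S)}
    (hr : st.r μ ν) (hp : p ∈ zUltra S F) (hc : core S F p = {ν}) :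
    classInter S F st.r μ ⊆ p := by
  have h1 : classInter S F st.r μ ⊆ tilde S F p :=
    Set.sInter_subset_of_mem ⟨p, hp, ν, hr, hc, rfl⟩
  exact h1.trans (Set.sInter_subset_of_mem ⟨hp, rfl⟩)

theorem mem_classInter (st : Setoid (specF S F)) (μ : specF S F) (H : C(specF S F, ℝ))
    (hH : ∀ ν, st.r μ ν → H ν = 0) {c : ℝ} (hc : 0 < c) :
    {s : S | H (epsF S F s) ≤ c} ∈ classInter S F st.r μ := by
  rw [classInter, interOf]
  rw [Set.mem_sInter]
  rintro C ⟨p, hp, ν, hν, hcore, rfl⟩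
  rw [tilde, Set.mem_sInter]
  rintro q' ⟨hq'U, hq'c⟩
  have hcq' : core S F q' = {ν} := hq'c.trans hcore
  apply zUltra_mem_of_meets S F hq'U (zset_le S F H c)
  intro Z hZ
  by_contra hempty
  rw [Set.not_nonempty_iff_eq_empty] at hempty
  have hνZ : ν ∈ epsCl S F Z := mem_epsCl_of_core S F hcq' hZ
  have hZsub : ∀ s ∈ Z, c ≤ H (epsF S F s) := by
    intro s hs
    by_contra hlt
    push_neg at hlt
    exact absurd hempty (Set.nonempty_iff_ne_empty.mp ⟨s, hlt.le, hs⟩)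
  have hν2 : ν ∈ {x | c ≤ H x} :=
    epsCl_subset_of S F Z _ (isClosed_le continuous_const H.continuous) hZsub hνZ
  have h0 : H ν = 0 := hH ν hν
  have : c ≤ H ν := hν2
  linarith

theorem quot_mk_continuous (st : Setoid (specF S F)) : Continuous (Quotient.mk st) :=
  continuous_quotient_mk'

theorem r_of_classInter_subset (st : Setoid (specF S F)) (hT2 : T2Space (Quotient st))
    {μ lam : specF S F} {p : Set (Set S)} (hp : p ∈ zUltra S F)
    (hsub : classInter S F st.r μ ⊆ p) (hcore : core S F p = {lam}) : st.r μ lam := by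
  by_contra hR
  haveI := aux_compact S F
  haveI := hT2
  haveI : CompactSpace (Quotient st) := Quotient.compactSpace
  haveI : NormalSpace (Quotient st) := inferInstance
  have hne : (Quotient.mk st μ) ≠ (Quotient.mk st lam) := fun h => hR (Quotient.exact h)
  obtain ⟨g, hg0, hg1, -⟩ := exists_continuous_zero_one_of_isClosed
    (isClosed_singleton (x := Quotient.mk st μ)) (isClosed_singleton (x := Quotient.mk st lam))
    (by rwa [Set.disjoint_singleton])
  set Hc : C(specF S F, ℝ) := g.comp ⟨Quotient.mk st, quot_mk_continuous S F st⟩ with hHc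
  have hH0 : ∀ ν, st.r μ ν → Hc ν = 0 := by
    intro ν hr
    show g (Quotient.mk st ν) = 0
    rw [← Quotient.sound hr]
    exact hg0 rfl
  have hA : {s : S | Hc (epsF S F s) ≤ 1/2} ∈ classInter S F st.r μ :=
    mem_classInter S F st μ Hc hH0 (by norm_num)
  have hlam : lam ∈ epsCl S F {s : S | Hc (epsF S F s) ≤ 1/2} :=
    mem_epsCl_of_core S F hcore (hsub hA)
  have h1 : Hc lam ≤ 1/2 := epsCl_le S F Hc (1/2) hlam
  have h2 : Hc lam = 1 := hg1 rfl
  rw [h2] at h1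
  norm_num at h1

theorem barSet_classInter (st : Setoid (specF S F)) (hT2 : T2Space (Quotient st))
    (μ : specF S F) : barSet S F (classInter S F st.r μ) = {ν | st.r μ ν} := by
  ext ν
  constructor
  · rintro ⟨p, hp, hsub, hcore⟩
    exact r_of_classInter_subset S F st hT2 hp hsub hcore
  · intro hr
    obtain ⟨p, hp, hcore⟩ := exists_core_singleton S F ν
    exact ⟨p, hp, classInter_subset_of S F st hr hp hcore, hcore⟩

theorem classInter_eq_of_r (st : Setoid (specF S F)) {μ ν : specF S F} (hr : st.r μ ν) :
    classInter S F st.r μ = classInter S F st.r ν := by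
  have : {κ | st.r μ κ} = {κ | st.r ν κ} := by
    ext κ
    exact ⟨fun h => st.iseqv.trans (st.iseqv.symm hr) h, fun h => st.iseqv.trans hr h⟩
  rw [classInter, classInter, this]

theorem classInter_inj (st : Setoid (specF S F)) (hT2 : T2Space (Quotient st))
    {μ ν : specF S F} (h : classInter S F st.r μ = classInter S F st.r ν) : st.r μ ν := by
  have h2 := barSet_classInter S F st hT2 ν
  have h1 := barSet_classInter S F st hT2 μ
  have : ν ∈ {κ | st.r ν κ} := st.iseqv.refl ν
  rw [← h2, ← h, h1] at this
  exact this

theorem preim_closed (st : Setoid (specF S F)) (hT2 : T2Space (Quotient st))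
    (K : Set (specF S F)) (hK : IsClosed K) :
    IsClosed {μ : specF S F | ∃ ν, st.r μ ν ∧ ν ∈ K} := by
  haveI := aux_compact S F
  haveI := hT2
  have heq : {μ : specF S F | ∃ ν, st.r μ ν ∧ ν ∈ K}
      = Quotient.mk st ⁻¹' (Quotient.mk st '' K) := by
    ext μ
    simp only [Set.mem_setOf_eq, Set.mem_preimage, Set.mem_image]
    constructor
    · rintro ⟨ν, hr, hν⟩
      exact ⟨ν, hν, (Quotient.sound hr).symm⟩
    · rintro ⟨ν, hν, he⟩
      exact ⟨ν, Quotient.exact he.symm, hν⟩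
  rw [heq]
  exact (((hK.isCompact).image (quot_mk_continuous S F st)).isClosed).preimage
    (quot_mk_continuous S F st)

end AuxDev


theorem epsCl_closed (A : Set S) : IsClosed (epsCl S F A) := isClosed_closure

theorem aux_tauStar_basic (Γ : Set (Set (Set S))) {A : Set S} (hA : A ∈ ZSet S F) :
    @IsOpen _ (tauStar S F Γ) (starSet S F Γ A)ᶜ := by
  rw [tauStar]
  exact TopologicalSpace.isOpen_generateFrom_of_mem ⟨A, hA, rfl⟩

theorem aux_t2Gamma (st : Setoid (specF S F)) (hT2 : T2Space (Quotient st))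
    (Γ : Set (Set (Set S))) (hΓ : Γ = Set.range (classInter S F st.r)) :
    @T2Space Γ (tauStar S F Γ) := by
  haveI := aux_compact S F
  haveI := hT2
  haveI : CompactSpace (Quotient st) := Quotient.compactSpace
  refine @T2Space.mk _ (tauStar S F Γ) ?_
  intro L K hLK
  have hLm : (L : Set (Set S)) ∈ Set.range (classInter S F st.r) := by
    rw [← hΓ]; exact L.2
  obtain ⟨μ, hμ⟩ := hLm
  have hKm : (K : Set (Set S)) ∈ Set.range (classInter S F st.r) := by
    rw [← hΓ]; exact K.2
  obtain ⟨ν, hν⟩ := hKm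
  have hr : ¬ st.r μ ν := by
    intro hr
    exact hLK (Subtype.ext (by rw [← hμ, ← hν, classInter_eq_of_r S F st hr]))
  have hne : (Quotient.mk st μ) ≠ (Quotient.mk st ν) := fun h => hr (Quotient.exact h)
  obtain ⟨g, hg0, hg1, -⟩ := exists_continuous_zero_one_of_isClosed
    (isClosed_singleton (x := Quotient.mk st μ)) (isClosed_singleton (x := Quotient.mk st ν))
    (by rwa [Set.disjoint_singleton])
  set Hc : C(specF S F, ℝ) := g.comp ⟨Quotient.mk st, quot_mk_continuous S F st⟩ with hHc
  set A : Set S := {s | 1/2 ≤ Hc (epsF S F s)} with hA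
  set B : Set S := {s | Hc (epsF S F s) ≤ 1/2} with hB
  refine ⟨(starSet S F Γ A)ᶜ, (starSet S F Γ B)ᶜ,
    aux_tauStar_basic S F Γ (zset_ge S F Hc (1/2)), aux_tauStar_basic S F Γ (zset_le S F Hc (1/2)),
    ?_, ?_, ?_⟩
  · intro hmem
    obtain ⟨κ, hκbar, hκA⟩ := hmem
    have hκr : st.r μ κ := by
      have h0 : κ ∈ barSet S F (classInter S F st.r μ) := by rw [hμ]; exact hκbar
      rwa [barSet_classInter S F st hT2 μ] at h0
    have h1 : 1/2 ≤ Hc κ := epsCl_ge S F Hc (1/2) hκA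
    have h2 : Hc κ = 0 := by
      show g (Quotient.mk st κ) = 0
      rw [← Quotient.sound hκr]
      exact hg0 rfl
    rw [h2] at h1
    norm_num at h1
  · intro hmem
    obtain ⟨κ, hκbar, hκB⟩ := hmem
    have hκr : st.r ν κ := by
      have h0 : κ ∈ barSet S F (classInter S F st.r ν) := by rw [hν]; exact hκbar
      rwa [barSet_classInter S F st hT2 ν] at h0
    have h1 : Hc κ ≤ 1/2 := epsCl_le S F Hc (1/2) hκB
    have h2 : Hc κ = 1 := by
      show g (Quotient.mk st κ) = 1
      rw [← Quotient.sound hκr]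
      exact hg1 rfl
    rw [h2] at h1
    norm_num at h1
  · rw [Set.disjoint_left]
    intro M hMA hMB
    have hMm : (M : Set (Set S)) ∈ Set.range (classInter S F st.r) := by
      rw [← hΓ]; exact M.2
    obtain ⟨κ, hκ⟩ := hMm
    have hself : κ ∈ barSet S F (M : Set (Set S)) := by
      rw [← hκ, barSet_classInter S F st hT2 κ]
      exact st.iseqv.refl κ
    have hcover : κ ∈ epsCl S F A ∪ epsCl S F B := by
      have h1 : κ ∈ closure (Set.range (epsF S F)) := by rw [aux_dense]; trivial
      have h2 : Set.range (epsF S F) ⊆ epsF S F '' A ∪ epsF S F '' B := by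
        rintro _ ⟨s, rfl⟩
        rcases le_total (Hc (epsF S F s)) (1/2) with h | h
        · exact Or.inr ⟨s, h, rfl⟩
        · exact Or.inl ⟨s, h, rfl⟩
      have h3 := closure_mono h2 h1
      rw [closure_union] at h3
      exact h3
    rcases hcover with h | h
    · exact hMA ⟨κ, hself, h⟩
    · exact hMB ⟨κ, hself, h⟩

/-- Lemma 3.5. -/
theorem statement4
    (hr : ∀ s : S, Continuous (fun t => t * s))
    (hF : (F.carrier : Set (S →ᵇ ℂ)) = LMCset S hl)
    (st : Setoid (specF S F)) (hT2 : T2Space (Quotient st))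
    (Γ : Set (Set (Set S))) (hΓ : Γ = Set.range (classInter S F st.r)) :
    (∀ φ : Quotient st → Γ,
        (∀ μ : specF S F, (φ (Quotient.mk st μ) : Set (Set S)) = classInter S F st.r μ) →
        @IsHomeomorph (Quotient st) Γ inferInstance (tauStar S F Γ) φ) ∧
      Nonempty (@Homeomorph (Quotient st) Γ inferInstance (tauStar S F Γ)) := by
  classical
  haveI := aux_compact S F
  haveI := hT2
  haveI : CompactSpace (Quotient st) := Quotient.compactSpace
  have main : ∀ φ : Quotient st → Γ,
      (∀ μ : specF S F, (φ (Quotient.mk st μ) : Set (Set S)) = classInter S F st.r μ) →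
      @IsHomeomorph (Quotient st) Γ inferInstance (tauStar S F Γ) φ := by
    intro φ hφ
    have hbij : Function.Bijective φ := by
      constructor
      · intro x y
        refine Quotient.inductionOn₂ x y ?_
        intro μ ν h
        have hc : classInter S F st.r μ = classInter S F st.r ν := by
          have h2 := congrArg Subtype.val h
          rwa [hφ μ, hφ ν] at h2
        exact Quotient.sound (classInter_inj S F st hT2 hc)
      · intro L
        have hL : (L : Set (Set S)) ∈ Set.range (classInter S F st.r) := by
          rw [← hΓ]; exact L.2
        obtain ⟨μ, hμ⟩ := hL
        exact ⟨Quotient.mk st μ, Subtype.ext (by rw [hφ μ, hμ])⟩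
    have hqm : IsQuotientMap (Quotient.mk st) := isQuotientMap_quotient_mk'
    have hcont : @Continuous _ _ _ (tauStar S F Γ) φ := by
      rw [tauStar, continuous_generateFrom_iff]
      rintro U ⟨A, hA, rfl⟩
      rw [← hqm.isOpen_preimage]
      have hpos : Quotient.mk st ⁻¹' (φ ⁻¹' (starSet S F Γ A))
          = {μ : specF S F | ∃ ν, st.r μ ν ∧ ν ∈ epsCl S F A} := by
        ext μ
        simp only [Set.mem_preimage, Set.mem_setOf_eq]
        constructor
        · intro h
          rw [starSet, Set.mem_setOf_eq, hφ μ, barSet_classInter S F st hT2 μ] at h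
          obtain ⟨κ, hκr, hκA⟩ := h
          exact ⟨κ, hκr, hκA⟩
        · rintro ⟨κ, hκr, hκA⟩
          rw [starSet, Set.mem_setOf_eq, hφ μ, barSet_classInter S F st hT2 μ]
          exact ⟨κ, hκr, hκA⟩
      rw [Set.preimage_compl, Set.preimage_compl, hpos, isOpen_compl_iff]
      exact preim_closed S F st hT2 _ (epsCl_closed S F A)
    have ht2 : @T2Space Γ (tauStar S F Γ) := aux_t2Gamma S F st hT2 Γ hΓ
    have hopen : @IsOpenMap _ _ _ (tauStar S F Γ) φ := by
      intro U hU
      have himg : φ '' U = (φ '' Uᶜ)ᶜ := by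
        rw [Set.image_compl_eq hbij, compl_compl]
      have hUc : IsCompact Uᶜ := hU.isClosed_compl.isCompact
      have hic : @IsCompact _ (tauStar S F Γ) (φ '' Uᶜ) :=
        @IsCompact.image _ _ _ (tauStar S F Γ) _ _ hUc hcont
      have hcl : @IsClosed _ (tauStar S F Γ) (φ '' Uᶜ) :=
        @IsCompact.isClosed _ (tauStar S F Γ) ht2 _ hic
      rw [himg]
      exact (@isOpen_compl_iff _ _ (tauStar S F Γ)).mpr hcl
    exact @IsHomeomorph.mk _ _ _ (tauStar S F Γ) φ hcont hopen hbij
  refine ⟨main, ?_⟩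
  let toΓ : specF S F → Γ := fun μ =>
    ⟨classInter S F st.r μ, by rw [hΓ]; exact Set.mem_range_self μ⟩
  let φ₀ : Quotient st → Γ :=
    Quotient.lift toΓ (fun μ ν hr => Subtype.ext (classInter_eq_of_r S F st hr))
  have hp : ∀ μ : specF S F, (φ₀ (Quotient.mk st μ) : Set (Set S)) = classInter S F st.r μ :=
    fun μ => rfl
  exact ⟨@IsHomeomorph.homeomorph _ _ _ (tauStar S F Γ) φ₀ (main φ₀ hp)⟩


end
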